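/- (Theorem 1 together with Corollaries 1 and 2: upper bound for an arbitrary measurement scheme.) Let d ≥ 1, let B be a nonempty finite type, let (p_b, ρ_b)_{b∈B} be an ensemble of density matrices on ℂ^d, let (R_b)_{b∈B} be nonnegative reals, and let σ_b := (1+R_b)⁻¹ · (ρ_b + (R_b/d) · I). Let 𝒳 be any nonempty set of POVMs indexed by B (representing a measurement scheme such as global measurements, LO, or LOCC). Define P_X(η) := sSup { ∑_b p_b · Re Tr(M_b ρ_b) : (M_b) ∈ 𝒳 } and P_X(ε) := sSup { ∑_b p_b · Re Tr(M_b σ_b) : (M_b) ∈ 𝒳 }. Then P_X(η) ≤ (1 + max_{b∈B} R_b) · P_X(ε). -/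

import Mathlib

open Matrix
open scoped ComplexOrder

section Aux
variable {n : Type*} [Fintype n] [DecidableEq n]
set_option linter.unusedSectionVars false

lemma psd_trace_nonneg {A : Matrix n n ℂ} (hA : A.PosSemidef) : 0 ≤ A.trace := by
  rw [Matrix.trace]
  apply Finset.sum_nonneg
  intro i _
  exact hA.diag_nonneg

open scoped MatrixOrder in
lemma psd_trace_mul_nonneg {A B : Matrix n n ℂ} (hA : A.PosSemidef) (hB : B.PosSemidef) :
    0 ≤ (A * B).trace := by
  obtain ⟨X, hX, -, hXA⟩ := CFC.exists_sqrt_of_isSelfAdjoint_of_quasispectrumRestricts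
    (a := A) hA.isHermitian
    (QuasispectrumRestricts.nnreal_of_nonneg hA.nonneg)
  have h1 : A * B = X * (X * B) := by
    rw [← Matrix.mul_assoc, hXA]
  rw [h1, trace_mul_comm]
  have h2 : X * B * X = Xᴴ * B * X := by
    rw [show Xᴴ = X from hX.star_eq]
  have h3 := hB.conjTranspose_mul_mul_same X
  rw [← h2] at h3
  exact psd_trace_nonneg h3

lemma re_psd_trace_mul_nonneg {A B : Matrix n n ℂ} (hA : A.PosSemidef) (hB : B.PosSemidef) :
    0 ≤ ((A * B).trace).re :=
  Complex.le_def.mp (psd_trace_mul_nonneg hA hB) |>.1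

lemma psd_smul {A : Matrix n n ℂ} (hA : A.PosSemidef) {c : ℝ} (hc : 0 ≤ c) :
    (c • A).PosSemidef := by
  have hc' : (0:ℂ) ≤ (c:ℂ) := by exact_mod_cast hc
  have : c • A = (c : ℂ) • A := by ext i j; simp [Matrix.smul_apply, Complex.real_smul]
  rw [this]
  exact hA.smul hc'

lemma psd_sum {B : Type*} (M : B → Matrix n n ℂ) (s : Finset B)
    (h : ∀ b ∈ s, (M b).PosSemidef) : (∑ b ∈ s, M b).PosSemidef :=
  Finset.sum_induction M Matrix.PosSemidef (fun _ _ => Matrix.PosSemidef.add)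
    Matrix.PosSemidef.zero h
end Aux

/-- A density matrix: positive semidefinite with unit trace. -/
def IsDensityMatrix {n : Type*} [Fintype n] [DecidableEq n] (ρ : Matrix n n ℂ) : Prop :=
  ρ.PosSemidef ∧ ρ.trace = 1

/-- A POVM: a family of positive semidefinite matrices summing to the identity. -/
def IsPOVM {n B : Type*} [Fintype n] [DecidableEq n] [Fintype B]
    (M : B → Matrix n n ℂ) : Prop :=
  (∀ b, (M b).PosSemidef) ∧ ∑ b, M b = 1

theorem stmt2 {d : ℕ} (hd : 1 ≤ d) {B : Type*} [Fintype B] [Nonempty B]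
    (p : B → ℝ) (ρ : B → Matrix (Fin d) (Fin d) ℂ)
    (hp : ∀ b, 0 ≤ p b) (hpsum : ∑ b, p b = 1)
    (hρ : ∀ b, IsDensityMatrix (ρ b))
    (R : B → ℝ) (hR : ∀ b, 0 ≤ R b)
    (σ : B → Matrix (Fin d) (Fin d) ℂ)
    (hσ : ∀ b, σ b = ((1 + R b)⁻¹ : ℝ) •
      (ρ b + ((R b / d : ℝ)) • (1 : Matrix (Fin d) (Fin d) ℂ)))
    (𝒳 : Set (B → Matrix (Fin d) (Fin d) ℂ))
    (h𝒳ne : 𝒳.Nonempty) (h𝒳 : ∀ M ∈ 𝒳, IsPOVM M) :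
    sSup { x : ℝ | ∃ M ∈ 𝒳, x = ∑ b, p b * ((M b * ρ b).trace).re } ≤
      (1 + Finset.univ.sup' Finset.univ_nonempty R) *
        sSup { x : ℝ | ∃ M ∈ 𝒳, x = ∑ b, p b * ((M b * σ b).trace).re } := by
  classical
  set Rm := Finset.univ.sup' Finset.univ_nonempty R with hRm
  have hd' : (0:ℝ) < d := by exact_mod_cast hd
  have hRb : ∀ b, (0:ℝ) < 1 + R b := fun b => by linarith [hR b]
  have hRmnn : 0 ≤ Rm := le_trans (hR (Classical.arbitrary B))
    (Finset.le_sup' R (Finset.mem_univ _))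
  have hRm1 : (0:ℝ) ≤ 1 + Rm := by linarith
  -- σ is a density matrix
  have hσpsd : ∀ b, (σ b).PosSemidef := by
    intro b
    rw [hσ b]
    exact psd_smul ((hρ b).1.add (psd_smul Matrix.PosSemidef.one
      (div_nonneg (hR b) hd'.le))) (inv_nonneg.mpr (hRb b).le)
  have hσtr : ∀ b, (σ b).trace = 1 := by
    intro b
    rw [hσ b, trace_smul, trace_add, trace_smul, (hρ b).2, trace_one]
    have h1 : ((Fintype.card (Fin d) : ℂ)) = (d:ℂ) := by simp
    rw [h1]
    have : (R b / d : ℝ) • (d:ℂ) = (R b : ℂ) := by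
      rw [Complex.real_smul]
      push_cast
      field_simp
    rw [this]
    rw [Complex.real_smul]
    have : ((1:ℂ) + (R b : ℂ)) ≠ 0 := by
      have := (hRb b).ne'
      intro h
      apply this
      have : ((1 + R b : ℝ) : ℂ) = 0 := by push_cast; exact h
      exact_mod_cast this
    push_cast
    field_simp
  -- trace relation
  have hre : ∀ (M : Matrix (Fin d) (Fin d) ℂ) (b : B),
      ((M * σ b).trace).re
        = (1 + R b)⁻¹ * (((M * ρ b).trace).re + (R b / d) * (M.trace).re) := by
    intro M b
    have h0 : (M * σ b).trace
        = ((1 + R b)⁻¹ : ℝ) • ((M * ρ b).trace + ((R b / d : ℝ)) • M.trace) := by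
      rw [hσ b, Matrix.mul_smul, Matrix.mul_add, Matrix.mul_smul, Matrix.mul_one,
        trace_smul, trace_add, trace_smul]
    rw [h0]
    simp only [Complex.real_smul]
    simp [Complex.mul_re, Complex.add_re]
    left
    rw [show ((1:ℂ) + (R b : ℂ)) = ((1 + R b : ℝ) : ℂ) by push_cast; ring,
      Complex.normSq_ofReal]
    have h9 := (hRb b).ne'
    field_simp
  have htr : ∀ (M : Matrix (Fin d) (Fin d) ℂ) (_ : M.PosSemidef) (b : B),
      ((M * ρ b).trace).re ≤ (1 + R b) * ((M * σ b).trace).re := by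
    intro M hM b
    rw [hre M b, ← mul_assoc, mul_inv_cancel₀ (hRb b).ne', one_mul]
    have hY : 0 ≤ (M.trace).re := (Complex.le_def.mp (psd_trace_nonneg hM)).1
    have hs : 0 ≤ R b / d := div_nonneg (hR b) hd'.le
    nlinarith
  -- pointwise bound: each value with σ is at most 1
  have hbound : ∀ M ∈ 𝒳, ∀ b : B, ((M b * σ b).trace).re ≤ 1 := by
    intro M hM b
    obtain ⟨hMpsd, hMsum⟩ := h𝒳 M hM
    have h1M : ((1 : Matrix (Fin d) (Fin d) ℂ) - M b).PosSemidef := by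
      have : (1 : Matrix (Fin d) (Fin d) ℂ) - M b = ∑ b' ∈ Finset.univ.erase b, M b' := by
        rw [← hMsum, Finset.sum_erase_eq_sub (Finset.mem_univ b)]
      rw [this]
      exact psd_sum M _ (fun b' _ => hMpsd b')
    have h2 := psd_trace_mul_nonneg h1M (hσpsd b)
    rw [Matrix.sub_mul, Matrix.one_mul, trace_sub, hσtr b] at h2
    have := (Complex.le_def.mp h2).1
    simp only [Complex.sub_re, Complex.one_re, Complex.zero_re] at this
    linarith
  have hBdd : BddAbove { x : ℝ | ∃ M ∈ 𝒳, x = ∑ b, p b * ((M b * σ b).trace).re } := by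
    refine ⟨1, fun x hx => ?_⟩
    obtain ⟨M, hM, rfl⟩ := hx
    calc ∑ b, p b * ((M b * σ b).trace).re ≤ ∑ b, p b * 1 :=
          Finset.sum_le_sum (fun b _ => mul_le_mul_of_nonneg_left (hbound M hM b) (hp b))
      _ = 1 := by simp [hpsum]
  apply csSup_le
  · obtain ⟨M, hM⟩ := h𝒳ne
    exact ⟨_, M, hM, rfl⟩
  · rintro x ⟨M, hM, rfl⟩
    have hy : (∑ b, p b * ((M b * σ b).trace).re) ∈
        { x : ℝ | ∃ M ∈ 𝒳, x = ∑ b, p b * ((M b * σ b).trace).re } := ⟨M, hM, rfl⟩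
    have hle : ∑ b, p b * ((M b * ρ b).trace).re
        ≤ (1 + Rm) * ∑ b, p b * ((M b * σ b).trace).re := by
      rw [Finset.mul_sum]
      apply Finset.sum_le_sum
      intro b _
      have h1 : ((M b * ρ b).trace).re ≤ (1 + R b) * ((M b * σ b).trace).re :=
        htr (M b) ((h𝒳 M hM).1 b) b
      have h2 : (1 + R b) * ((M b * σ b).trace).re ≤ (1 + Rm) * ((M b * σ b).trace).re := by
        apply mul_le_mul_of_nonneg_right _ (re_psd_trace_mul_nonneg ((h𝒳 M hM).1 b) (hσpsd b))
        have := Finset.le_sup' R (Finset.mem_univ b)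
        linarith
      calc p b * ((M b * ρ b).trace).re ≤ p b * ((1 + Rm) * ((M b * σ b).trace).re) :=
            mul_le_mul_of_nonneg_left (le_trans h1 h2) (hp b)
        _ = (1 + Rm) * (p b * ((M b * σ b).trace).re) := by ring
    exact le_trans hle (mul_le_mul_of_nonneg_left (le_csSup hBdd hy) hRm1)
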